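/- There exists a unique Lie algebra homomorphism θ : 𝔓_n → Der(𝕃_n) such that for all indices 1 ≤ i, j ≤ n with i ≠ j and all 1 ≤ k ≤ n: θ(A_{i,j})(x_k) = [x_i, x_j] if k = i, θ(A_{i,j})(x_k) = [x_j, x_i] if k = j, and θ(A_{i,j})(x_k) = 0 if k ∉ {i, j}. (In particular the assignment on generators respects the infinitesimal braid relations.) -/

import Mathlib

set_option maxHeartbeats 1000000

open FreeLieAlgebra

section TD

variable {R L : Type*} [CommRing R] [LieRing L] [LieAlgebra R L]

/-- The "tangent square" bracket on `L × L`: `⁅(a,b),(c,d)⁆ = (⁅a,c⁆, ⁅a,d⁆ + ⁅b,c⁆)`. -/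
instance prodBracket : Bracket (L × L) (L × L) :=
  ⟨fun x y => (⁅x.1, y.1⁆, ⁅x.1, y.2⁆ + ⁅x.2, y.1⁆)⟩

lemma prod_bracket_fst (x y : L × L) : ⁅x, y⁆.1 = ⁅x.1, y.1⁆ := rfl
lemma prod_bracket_snd (x y : L × L) : ⁅x, y⁆.2 = ⁅x.1, y.2⁆ + ⁅x.2, y.1⁆ := rfl

instance prodLieRing : LieRing (L × L) :=
  { prodBracket, (inferInstance : AddCommGroup (L × L)) with
    add_lie := fun x y z => by
      refine Prod.ext ?_ ?_ <;>
        simp only [prod_bracket_fst, prod_bracket_snd, Prod.fst_add, Prod.snd_add, add_lie] <;>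
        abel
    lie_add := fun x y z => by
      refine Prod.ext ?_ ?_ <;>
        simp only [prod_bracket_fst, prod_bracket_snd, Prod.fst_add, Prod.snd_add, lie_add] <;>
        abel
    lie_self := fun x => by
      refine Prod.ext ?_ ?_ <;>
        simp only [prod_bracket_fst, prod_bracket_snd, Prod.fst_zero, Prod.snd_zero, lie_self,
          ← lie_skew x.1 x.2, neg_add_cancel]
    leibniz_lie := fun x y z => by
      refine Prod.ext ?_ ?_
      · show ⁅x.1, ⁅y.1, z.1⁆⁆ = ⁅⁅x.1, y.1⁆, z.1⁆ + ⁅y.1, ⁅x.1, z.1⁆⁆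
        exact leibniz_lie x.1 y.1 z.1
      · show ⁅x.1, ⁅y.1, z.2⁆ + ⁅y.2, z.1⁆⁆ + ⁅x.2, ⁅y.1, z.1⁆⁆ =
          (⁅⁅x.1, y.1⁆, z.2⁆ + ⁅⁅x.1, y.2⁆ + ⁅x.2, y.1⁆, z.1⁆) +
          (⁅y.1, ⁅x.1, z.2⁆ + ⁅x.2, z.1⁆⁆ + ⁅y.2, ⁅x.1, z.1⁆⁆)
        rw [lie_add x.1, lie_add, add_lie, leibniz_lie x.1 y.1 z.2,
          leibniz_lie x.1 y.2 z.1, leibniz_lie x.2 y.1 z.1]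
        abel }

instance prodLieAlgebra : LieAlgebra R (L × L) where
  lie_smul t x y := by
    refine Prod.ext ?_ ?_ <;>
      simp only [prod_bracket_fst, prod_bracket_snd, Prod.smul_fst, Prod.smul_snd, lie_smul,
        smul_add]

/-- First projection as a Lie algebra homomorphism. -/
def fstLieHom (R L : Type*) [CommRing R] [LieRing L] [LieAlgebra R L] : (L × L) →ₗ⁅R⁆ L where
  toFun x := x.1
  map_add' _ _ := rfl
  map_smul' _ _ := rfl
  map_lie' := rfl

/-- A Lie derivation `D` yields a Lie algebra hom `x ↦ (x, D x)`. -/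
def graphLieHom (D : LieDerivation R L L) : L →ₗ⁅R⁆ L × L where
  toFun a := (a, D a)
  map_add' a b := by simp [Prod.ext_iff]
  map_smul' t a := by simp [Prod.ext_iff]
  map_lie' {a b} := by
    refine Prod.ext rfl ?_
    show D ⁅a, b⁆ = ⁅a, D b⁆ + ⁅D a, b⁆
    rw [LieDerivation.apply_lie_eq_add]

end TD

section DerOfGen

variable (R : Type*) (X : Type*) [CommRing R]

/-- Auxiliary Lie hom used to build a derivation of the free Lie algebra from its values on
generators. -/
noncomputable def derAux (f : X → FreeLieAlgebra R X) :
    FreeLieAlgebra R X →ₗ⁅R⁆ FreeLieAlgebra R X × FreeLieAlgebra R X :=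
  FreeLieAlgebra.lift R fun x => (of R x, f x)

lemma derAux_fst (f : X → FreeLieAlgebra R X) (a : FreeLieAlgebra R X) :
    (derAux R X f a).1 = a := by
  have h : (fstLieHom R _).comp (derAux R X f) = LieHom.id := by
    apply FreeLieAlgebra.hom_ext
    intro x
    simp [derAux, fstLieHom, lift_of_apply]
  simpa [fstLieHom, LieHom.comp_apply] using DFunLike.congr_fun h a

/-- The derivation of the free Lie algebra with prescribed values `f` on the generators. -/
noncomputable def derOfGen (f : X → FreeLieAlgebra R X) :
    LieDerivation R (FreeLieAlgebra R X) (FreeLieAlgebra R X) where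
  toLinearMap := (LinearMap.snd R _ _).comp (derAux R X f).toLinearMap
  leibniz' a b := by
    show (derAux R X f ⁅a, b⁆).2 = ⁅a, (derAux R X f b).2⁆ - ⁅b, (derAux R X f a).2⁆
    rw [LieHom.map_lie, prod_bracket_snd, derAux_fst, derAux_fst, ← lie_skew b]
    abel

@[simp] lemma derOfGen_of (f : X → FreeLieAlgebra R X) (x : X) :
    derOfGen R X f (of R x) = f x := by
  show (derAux R X f (of R x)).2 = f x
  rw [derAux, lift_of_apply]

/-- Two derivations of a free Lie algebra agreeing on the generators are equal. -/
lemma derOfGen_ext {D₁ D₂ : LieDerivation R (FreeLieAlgebra R X) (FreeLieAlgebra R X)}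
    (h : ∀ x, D₁ (of R x) = D₂ (of R x)) : D₁ = D₂ := by
  have hg : graphLieHom D₁ = graphLieHom D₂ := by
    apply FreeLieAlgebra.hom_ext
    intro x
    exact Prod.ext rfl (h x)
  ext a
  simpa [graphLieHom] using congrArg Prod.snd (DFunLike.congr_fun hg a)

end DerOfGen

/-! Statement definitions -/

/-- The free Lie algebra `𝕃_n` on generators `x_1, …, x_n`. -/
abbrev FreeLie (K : Type*) [Field K] (n : ℕ) := FreeLieAlgebra K (Fin n)

/-- Index type for the generators `A_{i,j}` (`i ≠ j`) of the Drinfeld–Kohno Lie algebra. -/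
abbrev DKGenIdx (n : ℕ) := {p : Fin n × Fin n // p.1 ≠ p.2}

section Main

variable (K : Type*) [Field K] {n : ℕ}

/-- The tangential derivation attached to a pair `(i, j)`. -/
noncomputable def Dg (i j : Fin n) : LieDerivation K (FreeLie K n) (FreeLie K n) :=
  derOfGen K (Fin n) fun k =>
    if k = i then ⁅of K i, of K j⁆ else if k = j then ⁅of K j, of K i⁆ else 0

lemma Dg_of (i j m : Fin n) :
    Dg K i j (of K m) =
      if m = i then ⁅of K i, of K j⁆ else if m = j then ⁅of K j, of K i⁆ else 0 :=
  derOfGen_of _ _ _ _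

lemma Dg_of_left (i j : Fin n) : Dg K i j (of K i) = ⁅of K i, of K j⁆ := by
  simp [Dg_of]

lemma Dg_of_right {i j : Fin n} (h : i ≠ j) : Dg K i j (of K j) = ⁅of K j, of K i⁆ := by
  simp [Dg_of, h.symm]

lemma Dg_of_ne {i j m : Fin n} (hmi : m ≠ i) (hmj : m ≠ j) : Dg K i j (of K m) = 0 := by
  simp [Dg_of, hmi, hmj]

/-- Helper Lie identities. -/
lemma lie_comm' {L : Type*} [LieRing L] (a b : L) : ⁅a, b⁆ = -⁅b, a⁆ := by
  rw [← lie_skew b a, neg_neg]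

lemma jac3 {L : Type*} [LieRing L] (a b c : L) :
    ⁅c, ⁅a, b⁆⁆ = ⁅b, ⁅a, c⁆⁆ - ⁅a, ⁅b, c⁆⁆ := by
  rw [lie_comm' c ⁅a, b⁆, lie_lie]
  abel

lemma Dg_symm {i j : Fin n} (h : i ≠ j) : Dg K i j = Dg K j i := by
  apply derOfGen_ext
  intro m
  rw [Dg_of, Dg_of]
  split_ifs with h1 h2 <;> simp_all

lemma dkRel2' (i j k : Fin n) (hij : i ≠ j) (hjk : j ≠ k) (hik : i ≠ k) :
    ⁅Dg K i k, Dg K i j + Dg K j k⁆ = 0 := by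
  apply derOfGen_ext
  intro m
  rw [LieDerivation.zero_apply, LieDerivation.lie_apply]
  rcases eq_or_ne m i with rfl | hmi
  · simp only [LieDerivation.add_apply, LieDerivation.apply_lie_eq_add, Dg_of, if_pos rfl,
      if_true, eq_self_iff_true, if_neg hij, if_neg hik, if_neg hij.symm, if_neg hjk,
      if_neg hik.symm, if_neg hjk.symm, lie_zero, zero_lie, add_zero, zero_add, map_add, map_zero]
    rw [lie_lie, lie_lie, jac3 (of K m) (of K j) (of K k)]
    abel
  rcases eq_or_ne m j with rfl | hmj
  · simp only [LieDerivation.add_apply, LieDerivation.apply_lie_eq_add, Dg_of, if_pos rfl,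
      if_true, eq_self_iff_true, if_neg hij, if_neg hik, if_neg hij.symm, if_neg hjk,
      if_neg hik.symm, if_neg hjk.symm, lie_zero, zero_lie, add_zero, zero_add, map_add, map_zero]
    rw [sub_zero, lie_comm' (of K k) (of K i), lie_neg, add_neg_cancel]
  rcases eq_or_ne m k with rfl | hmk
  · simp only [LieDerivation.add_apply, LieDerivation.apply_lie_eq_add, Dg_of, if_pos rfl,
      if_true, eq_self_iff_true, if_neg hij, if_neg hik, if_neg hij.symm, if_neg hjk,
      if_neg hik.symm, if_neg hjk.symm, lie_zero, zero_lie, add_zero, zero_add, map_add, map_zero]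
    rw [lie_lie, lie_lie, jac3 (of K m) (of K i) (of K j), lie_comm' (of K j) (of K i), lie_neg]
    abel
  · simp only [LieDerivation.add_apply, LieDerivation.apply_lie_eq_add, Dg_of, if_pos rfl,
      if_true, eq_self_iff_true, if_neg hij, if_neg hik, if_neg hij.symm, if_neg hjk,
      if_neg hik.symm, if_neg hjk.symm, if_neg hmi, if_neg hmj, if_neg hmk,
      lie_zero, zero_lie, add_zero, zero_add, map_add, map_zero, sub_self]

lemma dkRel3' (i j k l : Fin n) (hij : i ≠ j) (hkl : k ≠ l) (hik : i ≠ k) (hil : i ≠ l)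
    (hjk : j ≠ k) (hjl : j ≠ l) :
    ⁅Dg K i j, Dg K k l⁆ = 0 := by
  apply derOfGen_ext
  intro m
  rw [LieDerivation.zero_apply, LieDerivation.lie_apply]
  rcases eq_or_ne m i with rfl | hmi
  · simp only [LieDerivation.apply_lie_eq_add, Dg_of, if_pos rfl, if_true, eq_self_iff_true,
      if_neg hij, if_neg hik, if_neg hil, if_neg hjk, if_neg hjl, if_neg hij.symm,
      if_neg hik.symm, if_neg hil.symm, if_neg hjk.symm, if_neg hjl.symm, if_neg hkl,
      if_neg hkl.symm, lie_zero, zero_lie, add_zero, zero_add, map_zero, sub_self]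
  rcases eq_or_ne m j with rfl | hmj
  · simp only [LieDerivation.apply_lie_eq_add, Dg_of, if_pos rfl, if_true, eq_self_iff_true,
      if_neg hij, if_neg hik, if_neg hil, if_neg hjk, if_neg hjl, if_neg hij.symm,
      if_neg hik.symm, if_neg hil.symm, if_neg hjk.symm, if_neg hjl.symm, if_neg hkl,
      if_neg hkl.symm, lie_zero, zero_lie, add_zero, zero_add, map_zero, sub_self]
  rcases eq_or_ne m k with rfl | hmk
  · simp only [LieDerivation.apply_lie_eq_add, Dg_of, if_pos rfl, if_true, eq_self_iff_true,
      if_neg hij, if_neg hik, if_neg hil, if_neg hjk, if_neg hjl, if_neg hij.symm,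
      if_neg hik.symm, if_neg hil.symm, if_neg hjk.symm, if_neg hjl.symm, if_neg hkl,
      if_neg hkl.symm, if_neg hmi, if_neg hmj, lie_zero, zero_lie, add_zero, zero_add, map_zero,
      sub_self]
  rcases eq_or_ne m l with rfl | hml
  · simp only [LieDerivation.apply_lie_eq_add, Dg_of, if_pos rfl, if_true, eq_self_iff_true,
      if_neg hij, if_neg hik, if_neg hil, if_neg hjk, if_neg hjl, if_neg hij.symm,
      if_neg hik.symm, if_neg hil.symm, if_neg hjk.symm, if_neg hjl.symm, if_neg hkl,
      if_neg hkl.symm, if_neg hmi, if_neg hmj, lie_zero, zero_lie, add_zero, zero_add, map_zero,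
      sub_self]
  · simp only [Dg_of, if_neg hmi, if_neg hmj, if_neg hmk, if_neg hml, map_zero, sub_self]

end Main

/-- The set of infinitesimal braid relations inside the free Lie algebra on the `A_{i,j}`. -/
def dkRels (K : Type*) [Field K] (n : ℕ) : Set (FreeLieAlgebra K (DKGenIdx n)) :=
  (⋃ (i : Fin n) (j : Fin n) (h : i ≠ j),
      {of K (⟨(i, j), h⟩ : DKGenIdx n) - of K (⟨(j, i), h.symm⟩ : DKGenIdx n)}) ∪
  (⋃ (i : Fin n) (j : Fin n) (k : Fin n) (hij : i ≠ j) (hjk : j ≠ k) (hik : i ≠ k),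
      {⁅of K (⟨(i, k), hik⟩ : DKGenIdx n),
        of K (⟨(i, j), hij⟩ : DKGenIdx n) + of K (⟨(j, k), hjk⟩ : DKGenIdx n)⁆}) ∪
  (⋃ (i : Fin n) (j : Fin n) (k : Fin n) (l : Fin n)
      (hij : i ≠ j) (hkl : k ≠ l) (_ : i ≠ k) (_ : i ≠ l) (_ : j ≠ k) (_ : j ≠ l),
      {⁅of K (⟨(i, j), hij⟩ : DKGenIdx n), of K (⟨(k, l), hkl⟩ : DKGenIdx n)⁆})

/-- The Lie ideal generated by the infinitesimal braid relations. -/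
noncomputable def dkIdeal (K : Type*) [Field K] (n : ℕ) : LieIdeal K (FreeLieAlgebra K (DKGenIdx n)) :=
  LieSubmodule.lieSpan K _ (dkRels K n)

/-- The Drinfeld–Kohno Lie algebra `𝔓_n`. -/
abbrev DK (K : Type*) [Field K] (n : ℕ) :=
  FreeLieAlgebra K (DKGenIdx n) ⧸ dkIdeal K n

/-- The generator `A_{i,j}` of the Drinfeld–Kohno Lie algebra `𝔓_n`. -/
noncomputable def dkGen (K : Type*) [Field K] {n : ℕ} {i j : Fin n} (h : i ≠ j) : DK K n :=
  LieSubmodule.Quotient.mk (N := dkIdeal K n) (of K (⟨(i, j), h⟩ : DKGenIdx n))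

section Assemble

variable (K : Type*) [Field K] {n : ℕ}

/-- The assignment `A_{i,j} ↦ Dg i j` lifted to the free Lie algebra on the `A_{i,j}`. -/
noncomputable def dkPhi : FreeLieAlgebra K (DKGenIdx n) →ₗ⁅K⁆
    LieDerivation K (FreeLie K n) (FreeLie K n) :=
  FreeLieAlgebra.lift K fun p => Dg K p.1.1 p.1.2

lemma dkPhi_of (p : DKGenIdx n) : dkPhi K (of K p) = Dg K p.1.1 p.1.2 :=
  lift_of_apply _ _

lemma dkRels_subset_ker : dkRels K n ⊆ ((dkPhi K (n := n)).ker : Set _) := by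
  intro x hx
  simp only [dkRels, Set.mem_union, Set.mem_iUnion, Set.mem_singleton_iff] at hx
  rcases hx with (⟨i, j, h, rfl⟩ | ⟨i, j, k, hij, hjk, hik, rfl⟩) |
    ⟨i, j, k, l, hij, hkl, hik, hil, hjk, hjl, rfl⟩
  · rw [SetLike.mem_coe, LieHom.mem_ker, map_sub, dkPhi_of, dkPhi_of]
    exact sub_eq_zero.mpr (Dg_symm K h)
  · rw [SetLike.mem_coe, LieHom.mem_ker, LieHom.map_lie, map_add, dkPhi_of, dkPhi_of, dkPhi_of]
    exact dkRel2' K i j k hij hjk hik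
  · rw [SetLike.mem_coe, LieHom.mem_ker, LieHom.map_lie, dkPhi_of, dkPhi_of]
    exact dkRel3' K i j k l hij hkl hik hil hjk hjl

/-- The quotient map as a Lie algebra homomorphism. -/
noncomputable def dkMk : FreeLieAlgebra K (DKGenIdx n) →ₗ⁅K⁆ DK K n :=
  { (dkIdeal K n).toSubmodule.mkQ with
    map_lie' := fun {_ _} => rfl }

lemma dkMk_apply (a : FreeLieAlgebra K (DKGenIdx n)) :
    dkMk K a = LieSubmodule.Quotient.mk (N := dkIdeal K n) a := rfl

lemma dkMk_surjective : Function.Surjective (dkMk K (n := n)) :=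
  Submodule.Quotient.mk_surjective _

/-- The induced Lie algebra homomorphism `𝔓_n → Der(𝕃_n)`. -/
noncomputable def dkTheta : DK K n →ₗ⁅K⁆ LieDerivation K (FreeLie K n) (FreeLie K n) :=
  { Submodule.liftQ (dkIdeal K n).toSubmodule (dkPhi K).toLinearMap
      (fun x hx => LieHom.mem_ker.mp
        (LieSubmodule.lieSpan_le.mpr (dkRels_subset_ker K) hx)) with
    map_lie' := by
      intro x y
      obtain ⟨a, rfl⟩ := dkMk_surjective K x
      obtain ⟨b, rfl⟩ := dkMk_surjective K y
      exact LieHom.map_lie (dkPhi K) a b }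

lemma dkTheta_mk (a : FreeLieAlgebra K (DKGenIdx n)) :
    dkTheta K (dkMk K a) = dkPhi K a :=
  Submodule.liftQ_apply _ _ _

lemma dkTheta_gen {i j : Fin n} (h : i ≠ j) :
    dkTheta K (dkGen K h) = Dg K i j := by
  rw [show dkGen K h = dkMk K (of K (⟨(i, j), h⟩ : DKGenIdx n)) from rfl, dkTheta_mk, dkPhi_of]

end Assemble

theorem exists_unique_infinitesimal_braid_action (K : Type*) [Field K] (n : ℕ) (hn : 2 ≤ n) :
    ∃! θ : DK K n →ₗ⁅K⁆ LieDerivation K (FreeLie K n) (FreeLie K n),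
      ∀ (i j : Fin n) (h : i ≠ j) (k : Fin n),
        θ (dkGen K h) (of K k) =
          if k = i then ⁅of K i, of K j⁆
          else if k = j then ⁅of K j, of K i⁆
          else 0 := by
  refine ⟨dkTheta K, ?_, ?_⟩
  · intro i j h k
    rw [dkTheta_gen K h, Dg_of]
  · intro θ' hθ'
    have key : ∀ p : DKGenIdx n, θ' (dkMk K (of K p)) = dkTheta K (dkMk K (of K p)) := by
      rintro ⟨⟨i, j⟩, h⟩
      have h1 : dkMk K (of K (⟨(i, j), h⟩ : DKGenIdx n)) = dkGen K h := rfl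
      rw [h1]
      apply derOfGen_ext
      intro m
      rw [hθ' i j h m, dkTheta_gen K h, Dg_of]
    have : θ'.comp (dkMk K) = (dkTheta K).comp (dkMk K) :=
      FreeLieAlgebra.hom_ext key
    apply LieHom.ext
    intro q
    obtain ⟨a, rfl⟩ := dkMk_surjective K q
    exact DFunLike.congr_fun this a
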